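/- arXiv:2009.07630 — 3 statements merged into one kernel-verified Lean document; each statement's English description precedes it below -/
import Mathlib

section
/- Let M be a loopless matroid with real weights x : E → ℝ, let B be an x-optimal basis (of minimum total weight), and let e ∈ B. Then x(e) ≤ μ_e(x), where μ_e(x) is the min-max weight of e, defined as the minimum over all circuits C containing e of the maximum weight of an element in C - e. -/
open Matroid Set

variable {α : Type*}

/-- A circuit of a matroid: a minimal dependent set. -/
def Matroid.IsCircuit' (M : Matroid α) (C : Set α) : Prop :=
  M.Dep C ∧ ∀ ⦃D⦄, D ⊂ C → M.Indep D

/-- Looplessness in the sense of the paper: no element is a loop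
(every singleton of the ground set is independent) and no element is a
coloop (no element lies in all bases). -/
def Matroid.PaperLoopless (M : Matroid α) : Prop :=
  ∀ e ∈ M.E, M.Indep {e} ∧ ∃ B, M.IsBase B ∧ e ∉ B

/-- The weight `x(B)` of a set of ground elements. -/
noncomputable def setWeight (x : α → ℝ) (B : Set α) : ℝ := ∑ᶠ e ∈ B, x e

/-- The min-max weight `μ_e(x)`: the minimum over circuits `C` containing `e`
of the maximum weight of an element of `C - e`. -/
noncomputable def muWeight (M : Matroid α) (x : α → ℝ) (e : α) : ℝ :=
  sInf {w | ∃ C, M.IsCircuit' C ∧ e ∈ C ∧ w = sSup (x '' (C \ {e}))}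

/-- The bottleneck weight `b_e(x) = min {x(e), μ_e(x)}`. -/
noncomputable def bottleneck (M : Matroid α) (x : α → ℝ) (e : α) : ℝ :=
  min (x e) (muWeight M x e)

/-- The minimum weight of a basis of `M`. -/
noncomputable def mwb (M : Matroid α) (x : α → ℝ) : ℝ :=
  sInf {w | ∃ B, M.IsBase B ∧ w = setWeight x B}

/-- `B` is an `x`-optimal basis of `M`. -/
def IsOptimalBase (M : Matroid α) (x : α → ℝ) (B : Set α) : Prop :=
  M.IsBase B ∧ ∀ B', M.IsBase B' → setWeight x B ≤ setWeight x B'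

/-- Deletion of a single element. -/
noncomputable def Matroid.del (M : Matroid α) (e : α) : Matroid α :=
  M ↾ (M.E \ {e})

/-- Contraction of a single element, defined by duality: `M/e = (M✶ \ e)✶`. -/
noncomputable def Matroid.con (M : Matroid α) (e : α) : Matroid α :=
  ((M✶ ↾ (M.E \ {e}))✶)

lemma exists_circuit_subset (M : Matroid α) [M.Finite] {X : Set α} (hX : M.Dep X) :
    ∃ C ⊆ X, M.IsCircuit' C := by
  have hfin : {D | D ⊆ X ∧ M.Dep D}.Finite :=
    ((M.ground_finite.subset hX.subset_ground).finite_subsets).subset fun D hD => hD.1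
  obtain ⟨C, hC, hmin'⟩ := hfin.exists_minimalFor id _ ⟨X, le_refl X, hX⟩
  have hmin : ∀ D, D ⊆ X ∧ M.Dep D → D ⊆ C → C = D := fun D hD h => le_antisymm (hmin' hD h) h
  refine ⟨C, hC.1, hC.2, fun D hD => ?_⟩
  by_contra hind
  have hDdep : M.Dep D := by
    rw [Matroid.dep_iff]
    exact ⟨hind, hD.subset.trans hC.2.subset_ground⟩
  exact hD.ne' (hmin D ⟨hD.subset.trans hC.1, hDdep⟩ hD.subset)

lemma key (M : Matroid α) [M.Finite] (x : α → ℝ) {B : Set α}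
    (hB : IsOptimalBase M x B) {e : α} (heB : e ∈ B) {C : Set α}
    (hC : M.IsCircuit' C) (heC : e ∈ C) : x e ≤ sSup (x '' (C \ {e})) := by
  have hBbase := hB.1
  have hBE : B ⊆ M.E := hBbase.subset_ground
  have hEfin : M.E.Finite := M.ground_finite
  have hBe_ind : M.Indep (B \ {e}) := hBbase.indep.subset diff_subset
  have he_ncl : e ∉ M.closure (B \ {e}) :=
    hBbase.indep.notMem_closure_diff_of_mem heB
  have hCe_ssub : C \ {e} ⊂ C := ⟨diff_subset, fun h => (h heC).2 rfl⟩
  have hCe_ind : M.Indep (C \ {e}) := hC.2 hCe_ssub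
  have he_clC : e ∈ M.closure (C \ {e}) := by
    have := hCe_ind.insert_dep_iff (e := e)
    rw [insert_diff_singleton, insert_eq_self.mpr heC] at this
    exact (this.mp hC.1).1
  obtain ⟨f, hfC, hfcl⟩ : ∃ f ∈ C \ {e}, f ∉ M.closure (B \ {e}) := by
    by_contra h
    push_neg at h
    exact he_ncl ((M.closure_subset_closure h).trans
      (by rw [Matroid.closure_closure]) he_clC)
  have hfE : f ∈ M.E := hC.1.subset_ground hfC.1
  have hfB : f ∉ B := fun hfB => hfcl (M.subset_closure _ (diff_subset.trans hBE) ⟨hfB, hfC.2⟩)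
  have hfBe : f ∉ B \ {e} := fun h => hfB h.1
  have hind : M.Indep (insert f (B \ {e})) :=
    (hBe_ind.insert_indep_iff_of_notMem hfBe).mpr ⟨hfE, hfcl⟩
  have hbase : M.IsBase (insert f (B \ {e})) := hBbase.exchange_isBase_of_indep hfB hind
  have hwle := hB.2 _ hbase
  have hBfin : (B \ {e}).Finite := (hEfin.subset hBE).subset diff_subset
  have h1 : setWeight x B = x e + setWeight x (B \ {e}) := by
    unfold setWeight
    rw [← finsum_mem_insert x (fun h => h.2 rfl) hBfin,
      insert_diff_singleton, insert_eq_self.mpr heB]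
  have h2 : setWeight x (insert f (B \ {e})) = x f + setWeight x (B \ {e}) :=
    finsum_mem_insert x hfBe hBfin
  have hxef : x e ≤ x f := by rw [h1, h2] at hwle; linarith
  refine hxef.trans (le_csSup ?_ (mem_image_of_mem x hfC))
  exact (((hEfin.subset hC.1.subset_ground).subset diff_subset).image x).bddAbove

/-- for an optimal basis `B` and `e ∈ B`, `x(e) ≤ μ_e(x)`. -/
theorem stmt4 (M : Matroid α) [M.Finite] (hM : M.PaperLoopless)
    (x : α → ℝ) {B : Set α} (hB : IsOptimalBase M x B) {e : α} (heB : e ∈ B) :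
    x e ≤ muWeight M x e := by
  have heE : e ∈ M.E := hB.1.subset_ground heB
  obtain ⟨-, B₀, hB₀, heB₀⟩ := hM e heE
  have hdep : M.Dep (insert e B₀) := hB₀.insert_dep ⟨heE, heB₀⟩
  obtain ⟨C₀, hC₀sub, hC₀⟩ := exists_circuit_subset M hdep
  have heC₀ : e ∈ C₀ := by
    by_contra h
    exact hC₀.1.not_indep (hB₀.indep.subset ((subset_insert_iff_of_notMem h).mp hC₀sub))
  refine le_csInf ⟨_, C₀, hC₀, heC₀, rfl⟩ ?_
  rintro w ⟨C, hC, heC, rfl⟩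
  exact key M x hB heB hC heC
end

section
/- Tropical Kirchhoff formula, deletion part: For a loopless matroid M, element e, and weighting x : E → ℝ, the minimum weight of a basis of the deletion M\e equals mwb(M,x) - min{x(e), μ_e(x)} + μ_e(x). -/
open Matroid Set

variable {α : Type*}

/-! ### Auxiliary lemmas -/

lemma setWeight_insert (x : α → ℝ) {S : Set α} {a : α} (hS : S.Finite) (ha : a ∉ S) :
    setWeight x (insert a S) = x a + setWeight x S := by
  simpa [setWeight] using finsum_mem_insert x ha hS

lemma setWeight_remove (x : α → ℝ) {S : Set α} {a : α} (hS : S.Finite) (ha : a ∈ S) :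
    setWeight x S = x a + setWeight x (S \ {a}) := by
  have h : S = insert a (S \ {a}) := by
    rw [insert_diff_singleton, insert_eq_of_mem ha]
  nth_rewrite 1 [h]
  exact setWeight_insert x (hS.sdiff) (by simp)

/-- Fundamental circuit existence. -/
lemma exists_fund_circuit (M : Matroid α) [M.Finite] {B : Set α} {e : α}
    (hB : M.Indep B) (heB : e ∉ B) (hecl : e ∈ M.closure B) :
    ∃ C, M.IsCircuit' C ∧ e ∈ C ∧ C ⊆ insert e B := by
  have hdep : M.Dep (insert e B) := (hB.mem_closure_iff_of_notMem heB).mp hecl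
  obtain ⟨C, hCsub, hC⟩ := exists_circuit_subset M hdep
  refine ⟨C, hC, ?_, hCsub⟩
  by_contra heC
  have : C ⊆ B := fun y hy => ((hCsub hy).resolve_left (fun h => heC (h ▸ hy)))
  exact hC.1.not_indep (hB.subset this)

/-- Every element of a circuit is in the closure of the rest. -/
lemma circuit_mem_closure {M : Matroid α} {C : Set α} {f : α}
    (hC : M.IsCircuit' C) (hf : f ∈ C) : f ∈ M.closure (C \ {f}) := by
  have hind : M.Indep (C \ {f}) := hC.2 (sdiff_singleton_ssubset.mpr hf)
  have : insert f (C \ {f}) = C := by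
    rw [insert_diff_singleton, insert_eq_of_mem hf]
  rw [hind.mem_closure_iff, this]
  exact Or.inl hC.1

lemma circuit_diff_nonempty {M : Matroid α} {C : Set α} {e : α}
    (hC : M.IsCircuit' C) (he : e ∈ C) (hloop : M.Indep {e}) : (C \ {e}).Nonempty := by
  rw [nonempty_iff_ne_empty]
  intro h
  have : C = {e} := subset_antisymm (by
    intro y hy
    rcases eq_or_ne y e with rfl | hne
    · exact rfl
    · exact absurd (by exact ⟨hy, hne⟩ : y ∈ C \ {e}) (by simp [h]))
    (singleton_subset_iff.mpr he)
  exact hC.1.not_indep (this ▸ hloop)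

/-- Bases of the deletion are bases of `M` avoiding `e` (when `e` is not a coloop). -/
lemma del_base_iff {M : Matroid α} {e : α} {B₁ : Set α} (hB₁ : M.IsBase B₁) (heB₁ : e ∉ B₁)
    {B : Set α} : (M.del e).IsBase B ↔ M.IsBase B ∧ e ∉ B := by
  constructor
  · intro h
    have hbasis : M.IsBasis B (M.E \ {e}) :=
      (Matroid.isBase_restrict_iff (diff_subset)).mp h
    have hBsub : B ⊆ M.E \ {e} := hbasis.subset
    have hB₁sub : B₁ ⊆ M.E \ {e} :=
      subset_diff_singleton hB₁.subset_ground heB₁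
    have hB₁cl : B₁ ⊆ M.closure B := (hbasis.subset_closure).trans'  hB₁sub
    have hE : M.E ⊆ M.closure B := by
      calc M.E = M.closure B₁ := hB₁.closure_eq.symm
        _ ⊆ M.closure (M.closure B) := M.closure_subset_closure hB₁cl
        _ = M.closure B := M.closure_closure B
    exact ⟨hbasis.indep.isBase_of_ground_subset_closure hE, fun h' => (hBsub h').2 rfl⟩
  · rintro ⟨hB, heB⟩
    have hbasis : M.IsBasis B (M.E \ {e}) :=
      hB.indep.isBasis_of_subset_of_subset_closure
        (subset_diff_singleton hB.subset_ground heB)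
        (by rw [hB.closure_eq]; exact diff_subset)
    exact hbasis.restrict_isBase

/-- The exchange step removing `e` from a base, along a circuit through `e`. -/
lemma exchange_out {M : Matroid α} {B₀ C₀ : Set α} {e : α}
    (hB : M.IsBase B₀) (heB : e ∈ B₀) (hC : M.IsCircuit' C₀) (heC : e ∈ C₀) :
    ∃ f ∈ C₀ \ {e}, f ∉ B₀ ∧ M.IsBase (insert f (B₀ \ {e})) := by
  have hnotall : ¬ (C₀ \ {e} ⊆ M.closure (B₀ \ {e})) := by
    intro hsub
    have h1 : e ∈ M.closure (C₀ \ {e}) := circuit_mem_closure hC heC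
    have h2 : M.closure (C₀ \ {e}) ⊆ M.closure (B₀ \ {e}) := by
      calc M.closure (C₀ \ {e}) ⊆ M.closure (M.closure (B₀ \ {e})) :=
            M.closure_subset_closure hsub
        _ = M.closure (B₀ \ {e}) := M.closure_closure _
    exact hB.indep.notMem_closure_diff_of_mem heB (h2 h1)
  obtain ⟨f, hfC, hfcl⟩ := not_subset.mp hnotall
  have hfE : f ∈ M.E := hC.1.subset_ground hfC.1
  have hfB' : f ∉ B₀ \ {e} := fun h => hfcl (M.subset_closure _ (diff_subset.trans hB.subset_ground) h)
  have hind : M.Indep (insert f (B₀ \ {e})) := by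
    rw [(hB.indep.sdiff _).insert_indep_iff_of_notMem hfB']
    exact ⟨hfE, hfcl⟩
  have hfB : f ∉ B₀ := by
    intro h
    exact hfB' ⟨h, hfC.2⟩
  exact ⟨f, hfC, hfB, hB.exchange_isBase_of_indep hfB hind⟩

/-- The exchange step inserting `e` into a base avoiding it, along the
fundamental circuit. -/
lemma exchange_in {M : Matroid α} {B C : Set α} {e g : α}
    (hB : M.IsBase B) (heB : e ∉ B) (hC : M.IsCircuit' C) (heC : e ∈ C)
    (hCB : C ⊆ insert e B) (hg : g ∈ C \ {e}) :
    M.IsBase (insert e (B \ {g})) := by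
  have hgB : g ∈ B := ((hCB hg.1).resolve_left hg.2)
  have hecl : e ∉ M.closure (B \ {g}) := by
    intro hecl
    have hCg : C \ {g} ⊆ M.closure (B \ {g}) := by
      intro y hy
      rcases eq_or_ne y e with rfl | hne
      · exact hecl
      · refine M.subset_closure _ (diff_subset.trans hB.subset_ground) ?_
        have : y ∈ B := ((hCB hy.1).resolve_left hne)
        exact ⟨this, hy.2⟩
    have hgC : g ∈ C := hg.1
    have h1 : g ∈ M.closure (C \ {g}) := circuit_mem_closure hC hgC
    have h2 : M.closure (C \ {g}) ⊆ M.closure (B \ {g}) := by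
      calc M.closure (C \ {g}) ⊆ M.closure (M.closure (B \ {g})) :=
            M.closure_subset_closure hCg
        _ = M.closure (B \ {g}) := M.closure_closure _
    exact hB.indep.notMem_closure_diff_of_mem hgB (h2 h1)
  have heB' : e ∉ B \ {g} := fun h => heB h.1
  have hind : M.Indep (insert e (B \ {g})) := by
    rw [(hB.indep.sdiff _).insert_indep_iff_of_notMem heB']
    exact ⟨hC.1.subset_ground heC, hecl⟩
  exact hB.exchange_isBase_of_indep heB hind

/-- tropical Kirchhoff formula, deletion part. -/
theorem stmt10 (M : Matroid α) [M.Finite] (hM : M.PaperLoopless)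
    (x : α → ℝ) {e : α} (he : e ∈ M.E) :
    mwb (M.del e) x = mwb M x - min (x e) (muWeight M x e) + muWeight M x e := by
  obtain ⟨hloop, B₁, hB₁, heB₁⟩ := hM e he
  have hEfin : M.E.Finite := M.ground_finite
  -- the set of base weights of M
  set S : Set ℝ := {w | ∃ B, M.IsBase B ∧ w = setWeight x B} with hS
  have hSfin : S.Finite := by
    have : S ⊆ setWeight x '' {B | B ⊆ M.E} := by
      rintro w ⟨B, hB, rfl⟩
      exact ⟨B, hB.subset_ground, rfl⟩
    exact (hEfin.finite_subsets.image _).subset this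
  have hSne : S.Nonempty := by
    obtain ⟨B, hB⟩ := M.exists_isBase
    exact ⟨setWeight x B, B, hB, rfl⟩
  have hmwb_mem : mwb M x ∈ S := hSne.csInf_mem hSfin
  have hmwb_le : ∀ B, M.IsBase B → mwb M x ≤ setWeight x B := by
    intro B hB
    exact csInf_le hSfin.bddBelow ⟨B, hB, rfl⟩
  -- the set of circuit values defining μ
  set T : Set ℝ := {w | ∃ C, M.IsCircuit' C ∧ e ∈ C ∧ w = sSup (x '' (C \ {e}))} with hT
  have hTfin : T.Finite := by
    have : T ⊆ (fun C => sSup (x '' (C \ {e}))) '' {C | C ⊆ M.E} := by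
      rintro w ⟨C, hC, _, rfl⟩
      exact ⟨C, hC.1.subset_ground, rfl⟩
    exact (hEfin.finite_subsets.image _).subset this
  have hTne : T.Nonempty := by
    have hecl : e ∈ M.closure B₁ := by rw [hB₁.closure_eq]; exact he
    obtain ⟨C, hC, heC, -⟩ := exists_fund_circuit M hB₁.indep heB₁ hecl
    exact ⟨sSup (x '' (C \ {e})), C, hC, heC, rfl⟩
  have hmu_mem : muWeight M x e ∈ T := hTne.csInf_mem hTfin
  have hmu_le : ∀ C, M.IsCircuit' C → e ∈ C → muWeight M x e ≤ sSup (x '' (C \ {e})) := by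
    intro C hC heC
    exact csInf_le hTfin.bddBelow ⟨C, hC, heC, rfl⟩
  -- facts about sSup over a circuit
  have hsSup_ge : ∀ C : Set α, M.IsCircuit' C → ∀ f ∈ C \ {e}, x f ≤ sSup (x '' (C \ {e})) := by
    intro C hC f hf
    have hfin : (x '' (C \ {e})).Finite :=
      ((hEfin.subset hC.1.subset_ground).sdiff).image x
    exact le_csSup hfin.bddAbove ⟨f, hf, rfl⟩
  have hsSup_mem : ∀ C : Set α, M.IsCircuit' C → e ∈ C →
      ∃ f ∈ C \ {e}, x f = sSup (x '' (C \ {e})) := by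
    intro C hC heC
    have hfin : (x '' (C \ {e})).Finite :=
      ((hEfin.subset hC.1.subset_ground).sdiff).image x
    have hne : (x '' (C \ {e})).Nonempty :=
      (circuit_diff_nonempty hC heC hloop).image x
    obtain ⟨f, hf, hfx⟩ := hne.csSup_mem hfin
    exact ⟨f, hf, hfx⟩
  -- base weight set of the deletion
  set S' : Set ℝ := {w | ∃ B, (M.del e).IsBase B ∧ w = setWeight x B} with hS'
  have hS'eq : S' = {w | ∃ B, M.IsBase B ∧ e ∉ B ∧ w = setWeight x B} := by
    ext w
    simp only [hS', mem_setOf_eq, del_base_iff hB₁ heB₁]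
    tauto
  have hS'ne : S'.Nonempty := ⟨setWeight x B₁, B₁, (del_base_iff hB₁ heB₁).mpr ⟨hB₁, heB₁⟩, rfl⟩
  have hS'fin : S'.Finite := by
    have : S' ⊆ setWeight x '' {B | B ⊆ M.E} := by
      rw [hS'eq]
      rintro w ⟨B, hB, -, rfl⟩
      exact ⟨B, hB.subset_ground, rfl⟩
    exact (hEfin.finite_subsets.image _).subset this
  have hdel_le : ∀ B, M.IsBase B → e ∉ B → mwb (M.del e) x ≤ setWeight x B := by
    intro B hB heB
    exact csInf_le hS'fin.bddBelow ⟨B, (del_base_iff hB₁ heB₁).mpr ⟨hB, heB⟩, rfl⟩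
  -- key upper bound: there is a base avoiding e of weight ≤ mwb M x - min(x e, μ) + μ
  obtain ⟨B₀, hB₀, hB₀w⟩ := hmwb_mem
  have hB₀fin : B₀.Finite := hEfin.subset hB₀.subset_ground
  obtain ⟨C₀, hC₀, heC₀, hC₀sup⟩ := hmu_mem
  set μ := muWeight M x e with hμ
  -- upper bound
  have hupper : mwb (M.del e) x ≤ mwb M x - min (x e) μ + μ := by
    by_cases heB₀ : e ∈ B₀
    · obtain ⟨f, hf, hfB, hbase⟩ := exchange_out hB₀ heB₀ hC₀ heC₀
      have hfB' : f ∉ B₀ \ {e} := fun h => hfB h.1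
      have heB' : e ∉ insert f (B₀ \ {e}) := by
        rintro (rfl | h)
        · exact hf.2 rfl
        · exact h.2 rfl
      have hw : setWeight x (insert f (B₀ \ {e})) = setWeight x B₀ - x e + x f := by
        rw [setWeight_insert x (hB₀fin.sdiff) hfB',
          setWeight_remove x hB₀fin heB₀]
        ring
      have hxf : x f ≤ μ := by
        rw [hC₀sup]
        exact hsSup_ge C₀ hC₀ f hf
      have := hdel_le _ hbase heB'
      rw [hw, ← hB₀w] at this
      have hmin : min (x e) μ ≤ x e := min_le_left _ _
      linarith
    · have := hdel_le _ hB₀ heB₀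
      have hmin : min (x e) μ ≤ μ := min_le_right _ _
      rw [← hB₀w] at this
      linarith
  -- lower bound
  have hlower : mwb M x - min (x e) μ + μ ≤ mwb (M.del e) x := by
    refine le_csInf hS'ne ?_
    rintro w ⟨B, hBdel, rfl⟩
    obtain ⟨hB, heB⟩ := (del_base_iff hB₁ heB₁).mp hBdel
    have hBfin : B.Finite := hEfin.subset hB.subset_ground
    have hmB : mwb M x ≤ setWeight x B := hmwb_le B hB
    rcases le_total (x e) μ with hxe | hxe
    · -- min = x e; need mwb M x - x e + μ ≤ w
      rw [min_eq_left hxe]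
      -- fundamental circuit of e w.r.t. B
      have hecl : e ∈ M.closure B := by rw [hB.closure_eq]; exact he
      obtain ⟨C, hC, heC, hCB⟩ := exists_fund_circuit M hB.indep heB hecl
      obtain ⟨g, hg, hgx⟩ := hsSup_mem C hC heC
      have hgB : g ∈ B := ((hCB hg.1).resolve_left hg.2)
      have hbase := exchange_in hB heB hC heC hCB hg
      have heBg : e ∉ B \ {g} := fun h => heB h.1
      have hw : setWeight x (insert e (B \ {g})) = setWeight x B - x g + x e := by
        rw [setWeight_insert x (hBfin.sdiff) heBg,
          setWeight_remove x hBfin hgB]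
        ring
      have h1 : mwb M x ≤ setWeight x B - x g + x e := by
        rw [← hw]; exact hmwb_le _ hbase
      have h2 : μ ≤ x g := by
        rw [hgx]; exact hmu_le C hC heC
      linarith
    · rw [min_eq_right hxe]
      linarith
  linarith
end

section
/- Sensitivity under global change: Let M be a loopless matroid, x : E → ℝ a weighting, and B an x-optimal basis. If a weighting x' satisfies |x'(e) - x(e)| ≤ (1/2)|μ_e(x) - x(e)| for every element e ∈ E, then B is also x'-optimal. -/
open Matroid Set

variable {α : Type*}

section Circuit

variable {M : Matroid α} {B C C₁ C₂ X : Set α} {e f g : α}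

lemma Matroid.IsCircuit'.subset_ground (hC : M.IsCircuit' C) : C ⊆ M.E := hC.1.subset_ground

lemma Matroid.IsCircuit'.finite [M.Finite] (hC : M.IsCircuit' C) : C.Finite :=
  M.set_finite C hC.subset_ground

lemma Matroid.IsCircuit'.diff_singleton_indep (hC : M.IsCircuit' C) (he : e ∈ C) :
    M.Indep (C \ {e}) := hC.2 (sdiff_singleton_ssubset.2 he)

lemma Matroid.IsCircuit'.mem_closure_diff_singleton (hC : M.IsCircuit' C) (he : e ∈ C) :
    e ∈ M.closure (C \ {e}) := by
  have hI := hC.diff_singleton_indep he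
  have hdep : M.Dep (insert e (C \ {e})) := by
    rw [insert_diff_singleton, insert_eq_self.2 he]; exact hC.1
  exact (hI.insert_dep_iff.1 hdep).1

private lemma exists_circuit_subset_aux [M.Finite] :
    ∀ n (X : Set α), X.ncard ≤ n → M.Dep X → ∃ C, C ⊆ X ∧ M.IsCircuit' C := by
  intro n
  induction n with
  | zero =>
    intro X hle hX
    have hfin : X.Finite := M.set_finite X hX.subset_ground
    rw [Nat.le_zero, ncard_eq_zero hfin] at hle
    subst hle
    exact absurd M.empty_indep hX.not_indep
  | succ n ih =>
    intro X hle hX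
    have hfin : X.Finite := M.set_finite X hX.subset_ground
    by_cases h : ∀ ⦃D⦄, D ⊂ X → M.Indep D
    · exact ⟨X, rfl.subset, hX, h⟩
    · push_neg at h
      obtain ⟨D, hDX, hD⟩ := h
      have hDdep : M.Dep D := ⟨hD, hDX.subset.trans hX.subset_ground⟩
      obtain ⟨C, hCD, hC⟩ := ih D (by
        have := ncard_lt_ncard hDX hfin
        omega) hDdep
      exact ⟨C, hCD.trans hDX.subset, hC⟩

lemma Matroid.Dep.exists_isCircuit'_subset [M.Finite] (hX : M.Dep X) :
    ∃ C, C ⊆ X ∧ M.IsCircuit' C :=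
  exists_circuit_subset_aux X.ncard X le_rfl hX

lemma exists_fundCircuit [M.Finite] (hB : M.Indep B) (hf : f ∈ M.closure B \ B) :
    ∃ C, M.IsCircuit' C ∧ f ∈ C ∧ C ⊆ insert f B := by
  have hdep : M.Dep (insert f B) := hB.insert_dep_iff.2 hf
  obtain ⟨C, hCs, hC⟩ := hdep.exists_isCircuit'_subset
  refine ⟨C, hC, ?_, hCs⟩
  by_contra hfC
  have : C ⊆ B := fun a haC => ((hCs haC).resolve_left (fun h => hfC (h ▸ haC)))
  exact hC.1.not_indep (hB.subset this)

/-- Strong circuit elimination. -/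
lemma Matroid.IsCircuit'.strong_elimination [M.Finite] (hC₁ : M.IsCircuit' C₁) (hC₂ : M.IsCircuit' C₂)
    (he : e ∈ C₁ ∩ C₂) (hf : f ∈ C₁ \ C₂) :
    ∃ C, M.IsCircuit' C ∧ f ∈ C ∧ C ⊆ (C₁ ∪ C₂) \ {e} := by
  classical
  set X : Set α := (C₁ ∪ C₂) \ {e, f} with hX
  have hXE : X ⊆ M.E := (diff_subset).trans (union_subset hC₁.subset_ground hC₂.subset_ground)
  have hfe : f ≠ e := fun h => hf.2 (h ▸ he.2)
  have heX : e ∈ M.closure X := by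
    refine M.closure_subset_closure ?_ (hC₂.mem_closure_diff_singleton he.2)
    intro a ha
    exact ⟨Or.inr ha.1, by
      rintro (rfl | rfl)
      · exact ha.2 rfl
      · exact hf.2 ha.1⟩
  have hfX : f ∈ M.closure (insert e X) := by
    refine M.closure_subset_closure ?_ (hC₁.mem_closure_diff_singleton hf.1)
    intro a ha
    by_cases hae : a = e
    · exact hae ▸ mem_insert _ _
    · refine Or.inr ⟨Or.inl ha.1, ?_⟩
      simp only [mem_insert_iff, mem_singleton_iff]
      rintro (rfl | rfl)
      · exact hae rfl
      · exact ha.2 rfl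
  rw [closure_insert_eq_of_mem_closure heX] at hfX
  obtain ⟨I, hI⟩ := M.exists_isBasis X hXE
  have hfI : f ∈ M.closure I := by rwa [hI.closure_eq_closure]
  have hfnI : f ∉ I := fun h => (hI.subset h).2 (Or.inr rfl)
  obtain ⟨C, hC, hfC, hCs⟩ := exists_fundCircuit hI.indep ⟨hfI, hfnI⟩
  refine ⟨C, hC, hfC, hCs.trans ?_⟩
  intro a ha
  rcases ha with rfl | haI
  · exact ⟨Or.inl hf.1, fun h => hfe h⟩
  · exact ⟨(hI.subset haI).1, fun h => (hI.subset haI).2 (Or.inl h)⟩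

/-- Uniqueness of the fundamental circuit. -/
lemma fundCircuit_unique [M.Finite] (hB : M.Indep B)
    (h₁ : M.IsCircuit' C₁) (hf₁ : f ∈ C₁) (hs₁ : C₁ ⊆ insert f B)
    (h₂ : M.IsCircuit' C₂) (hf₂ : f ∈ C₂) (hs₂ : C₂ ⊆ insert f B) : C₁ = C₂ := by
  have key : ∀ (D₁ D₂ : Set α), M.IsCircuit' D₁ → f ∈ D₁ → D₁ ⊆ insert f B →
      M.IsCircuit' D₂ → f ∈ D₂ → D₂ ⊆ insert f B → D₁ ⊆ D₂ := by
    intro D₁ D₂ hD₁ hfD₁ hsD₁ hD₂ hfD₂ hsD₂ g hg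
    by_contra hgD₂
    obtain ⟨C, hC, hgC, hCs⟩ :=
      hD₁.strong_elimination hD₂ ⟨hfD₁, hfD₂⟩ ⟨hg, hgD₂⟩
    refine hC.1.not_indep (hB.subset ?_)
    intro a haC
    rcases (hCs haC).1 with h | h
    · exact ((hsD₁ h).resolve_left (fun hh => (hCs haC).2 (hh ▸ rfl)))
    · exact ((hsD₂ h).resolve_left (fun hh => (hCs haC).2 (hh ▸ rfl)))
  exact subset_antisymm (key C₁ C₂ h₁ hf₁ hs₁ h₂ hf₂ hs₂) (key C₂ C₁ h₂ hf₂ hs₂ h₁ hf₁ hs₁)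

end Circuit

section Mu

variable {M : Matroid α} {B C X : Set α} {e f g : α} {x : α → ℝ} {b : ℝ} {a : ℝ}

lemma circuit_diff_nonempty_s17 (hM : M.PaperLoopless) (hC : M.IsCircuit' C) (he : e ∈ C) :
    (C \ {e}).Nonempty := by
  rw [nonempty_iff_ne_empty]
  intro h
  have hCe : C = {e} := by
    apply subset_antisymm
    · intro a ha
      by_contra hne
      exact (eq_empty_iff_forall_notMem.1 h) a ⟨ha, hne⟩
    · simpa using he
  exact hC.1.not_indep (hCe ▸ (hM e (hC.subset_ground he)).1)

lemma le_sSup_img [M.Finite] (hC : M.IsCircuit' C) (hg : g ∈ C \ {e}) :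
    x g ≤ sSup (x '' (C \ {e})) :=
  le_csSup (((hC.finite.diff).image x).bddAbove) (mem_image_of_mem x hg)

lemma sSup_img_le (hne : (C \ {e}).Nonempty) (h : ∀ g ∈ C \ {e}, x g ≤ b) :
    sSup (x '' (C \ {e})) ≤ b :=
  csSup_le (hne.image x) (by rwa [forall_mem_image])

lemma muSet_finite (M : Matroid α) [M.Finite] (x : α → ℝ) (e : α) :
    {w | ∃ C, M.IsCircuit' C ∧ e ∈ C ∧ w = sSup (x '' (C \ {e}))}.Finite := by
  refine ((M.ground_finite.finite_subsets).image
    (fun C => sSup (x '' (C \ {e})))).subset ?_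
  rintro w ⟨C, hC, heC, rfl⟩
  exact ⟨C, hC.subset_ground, rfl⟩

lemma mu_le [M.Finite] (hC : M.IsCircuit' C) (he : e ∈ C) :
    muWeight M x e ≤ sSup (x '' (C \ {e})) :=
  csInf_le (muSet_finite M x e).bddBelow ⟨C, hC, he, rfl⟩

lemma le_mu [M.Finite] (hex : ∃ C, M.IsCircuit' C ∧ e ∈ C)
    (h : ∀ C, M.IsCircuit' C → e ∈ C → a ≤ sSup (x '' (C \ {e}))) :
    a ≤ muWeight M x e := by
  obtain ⟨C₀, hC₀, he₀⟩ := hex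
  exact le_csInf ⟨_, C₀, hC₀, he₀, rfl⟩ (by rintro w ⟨C, hC, heC, rfl⟩; exact h C hC heC)

lemma setWeight_def (x : α → ℝ) (X : Set α) : setWeight x X = ∑ᶠ e ∈ X, x e := rfl

/-- swapping `e` out and `f` in cannot decrease the weight. -/
lemma weight_swap [M.Finite] (hB : IsOptimalBase M x B) (he : e ∈ B) (hf : f ∉ B)
    (hbase : M.IsBase (insert f (B \ {e}))) : x e ≤ x f := by
  have hfin : B.Finite := M.set_finite B hB.1.subset_ground
  have h1 : setWeight x (insert f (B \ {e})) = x f + setWeight x (B \ {e}) :=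
    finsum_mem_insert x (fun h => hf h.1) (hfin.diff)
  have h2 : setWeight x B = x e + setWeight x (B \ {e}) := by
    calc setWeight x B = setWeight x (insert e (B \ {e})) := by
          rw [insert_diff_singleton, insert_eq_self.2 he]
      _ = x e + setWeight x (B \ {e}) :=
          finsum_mem_insert x (fun h => h.2 rfl) (hfin.diff)
  have := hB.2 _ hbase
  rw [h1, h2] at this
  linarith

/-- the fundamental circuit exists for `f ∈ E \ B`. -/
lemma exists_fundCircuit_of_base [M.Finite] (hB : M.IsBase B) (hf : f ∈ M.E \ B) :
    ∃ C, M.IsCircuit' C ∧ f ∈ C ∧ C ⊆ insert f B :=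
  exists_fundCircuit hB.indep (by rw [hB.closure_eq]; exact hf)

/-- O1: elements of a fundamental circuit have weight at most that of `f`. -/
lemma opt_le [M.Finite] (hB : IsOptimalBase M x B) (hf : f ∈ M.E \ B)
    (hC : M.IsCircuit' C) (hfC : f ∈ C) (hCB : C ⊆ insert f B) (hg : g ∈ C \ {f}) :
    x g ≤ x f := by
  have hgB : g ∈ B := ((hCB hg.1).resolve_left hg.2)
  have hind : M.Indep (insert f B \ {g}) := by
    rw [← not_dep_iff (by
      refine (diff_subset).trans (insert_subset hf.1 hB.1.subset_ground))]
    intro hdep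
    obtain ⟨C', hC's, hC'⟩ := hdep.exists_isCircuit'_subset
    have hfC' : f ∈ C' := by
      by_contra hfC'
      refine hC'.1.not_indep (hB.1.indep.subset fun a haC' => ?_)
      rcases (hC's haC').1 with rfl | h
      · exact absurd haC' hfC'
      · exact h
    have : C' = C := fundCircuit_unique hB.1.indep hC' hfC'
      (fun a ha => (hC's ha).1) hC hfC hCB
    exact (hC's (this ▸ hg.1)).2 rfl
  have hbase := hB.1.exchange_isBase_of_indep' hgB (fun h => hf.2 h) hind
  rw [← insert_diff_singleton_comm (fun h => hg.2 (h ▸ rfl) : f ≠ g)] at hbase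
  exact weight_swap hB hgB hf.2 hbase

end Mu

section Opt

variable {M : Matroid α} {B C X : Set α} {e f g : α} {x : α → ℝ}

open Classical in
/-- A choice of fundamental circuit of `f` with respect to `B`. -/
noncomputable def fc (M : Matroid α) (B : Set α) (f : α) : Set α :=
  if h : ∃ C, M.IsCircuit' C ∧ f ∈ C ∧ C ⊆ insert f B then h.choose else ∅

lemma fc_spec (h : ∃ C, M.IsCircuit' C ∧ f ∈ C ∧ C ⊆ insert f B) :
    M.IsCircuit' (fc M B f) ∧ f ∈ fc M B f ∧ fc M B f ⊆ insert f B := by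
  classical
  rw [fc, dif_pos h]
  exact h.choose_spec

/-- FC: the fundamental circuit attains the min-max. -/
lemma fund_min [M.Finite] (hM : M.PaperLoopless) (hB : IsOptimalBase M x B)
    (hf : f ∈ M.E \ B) :
    ∀ n C, (C \ insert f B).ncard ≤ n → M.IsCircuit' C → f ∈ C →
      sSup (x '' (fc M B f \ {f})) ≤ sSup (x '' (C \ {f})) := by
  obtain ⟨hfcC, hffc, hfcs⟩ := fc_spec (exists_fundCircuit_of_base hB.1 hf)
  intro n
  induction n with
  | zero =>
    intro C hle hC hfC
    have hsub : C ⊆ insert f B := by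
      rw [Nat.le_zero, ncard_eq_zero ((M.set_finite C hC.subset_ground).diff)] at hle
      rwa [diff_eq_empty] at hle
    rw [fundCircuit_unique hB.1.indep hfcC hffc hfcs hC hfC hsub]
  | succ n ih =>
    intro C hle hC hfC
    by_cases hsub : C ⊆ insert f B
    · rw [fundCircuit_unique hB.1.indep hfcC hffc hfcs hC hfC hsub]
    · obtain ⟨h, hhC, hhB⟩ := not_subset.1 hsub
      have hhf : h ≠ f := fun hc => hhB (hc ▸ mem_insert _ _)
      have hhB' : h ∉ B := fun hc => hhB (mem_insert_of_mem _ hc)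
      have hhE : h ∈ M.E \ B := ⟨hC.subset_ground hhC, hhB'⟩
      obtain ⟨hCh, hhCh, hChs⟩ := fc_spec (exists_fundCircuit_of_base hB.1 hhE)
      have hfCh : f ∉ fc M B h := fun hmem => by
        rcases hChs hmem with hc | hfB
        · exact hhf hc.symm
        · exact hf.2 hfB
      obtain ⟨C', hC', hfC', hC's⟩ := hC.strong_elimination hCh ⟨hhC, hhCh⟩ ⟨hfC, hfCh⟩
      have hmeas : C' \ insert f B ⊆ (C \ insert f B) \ {h} := by
        intro a ha
        obtain ⟨haU, hah⟩ := hC's ha.1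
        refine ⟨⟨?_, ha.2⟩, hah⟩
        rcases haU with h1 | h1
        · exact h1
        · exfalso
          rcases hChs h1 with hc | h2
          · exact hah (hc ▸ rfl)
          · exact ha.2 (mem_insert_of_mem _ h2)
      have hcard : (C' \ insert f B).ncard ≤ n := by
        have h1 : ((C \ insert f B) \ {h}).ncard < (C \ insert f B).ncard :=
          ncard_diff_singleton_lt_of_mem ⟨hhC, hhB⟩
            ((M.set_finite C hC.subset_ground).diff)
        have h2 := ncard_le_ncard hmeas
          (((M.set_finite C hC.subset_ground).diff).diff)
        omega
      refine (ih C' hcard hC' hfC').trans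
        (sSup_img_le (circuit_diff_nonempty_s17 hM hC' hfC') ?_)
      intro a ha
      obtain ⟨haU, hah⟩ := hC's ha.1
      rcases haU with h1 | h1
      · exact le_sSup_img hC ⟨h1, ha.2⟩
      · have hah' : a ≠ h := fun hc => hah (hc ▸ rfl)
        exact (opt_le hB hhE hCh hhCh hChs ⟨h1, hah'⟩).trans
          (le_sSup_img hC ⟨hhC, fun hc => hhf (by simpa using hc)⟩)

lemma exists_circuit_mem [M.Finite] (hM : M.PaperLoopless) (he : e ∈ M.E) :
    ∃ C, M.IsCircuit' C ∧ e ∈ C := by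
  obtain ⟨_, B₀, hB₀, heB₀⟩ := hM e he
  obtain ⟨C, hC, heC, _⟩ := exists_fundCircuit_of_base hB₀ ⟨he, heB₀⟩
  exact ⟨C, hC, heC⟩

lemma mu_ge_of_mem_base [M.Finite] (hM : M.PaperLoopless) (hB : IsOptimalBase M x B)
    (he : e ∈ B) : x e ≤ muWeight M x e := by
  refine le_mu (exists_circuit_mem hM (hB.1.subset_ground he)) (fun C hC heC => ?_)
  set S := (B \ {e}) ∪ (C \ {e}) with hS
  have hSE : S ⊆ M.E := union_subset ((diff_subset).trans hB.1.subset_ground)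
    ((diff_subset).trans hC.subset_ground)
  have hcl : M.E ⊆ M.closure S := by
    have hBcl : B ⊆ M.closure S := by
      intro a ha
      by_cases hae : a = e
      · subst hae
        exact M.closure_subset_closure subset_union_right
          (hC.mem_closure_diff_singleton heC)
      · exact M.subset_closure S hSE (Or.inl ⟨ha, hae⟩)
    calc M.E = M.closure B := (hB.1.closure_eq).symm
      _ ⊆ M.closure S := M.closure_subset_closure_of_subset_closure hBcl
  obtain ⟨I, hI, hBI⟩ := (hB.1.indep.subset diff_subset).subset_isBasis_of_subset
    (subset_union_left : B \ {e} ⊆ S) hSE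
  have hIbase : M.IsBase I := by
    refine hI.indep.isBase_of_ground_subset_closure ?_
    rw [hI.closure_eq_closure]
    exact hcl
  have heI : e ∉ I := fun h => by
    rcases hI.subset h with h1 | h1
    · exact h1.2 rfl
    · exact h1.2 rfl
  have hex : ∃ f ∈ I, f ∉ B := by
    by_contra hcon
    push_neg at hcon
    have hIB : I ⊆ B \ {e} := fun a ha => ⟨hcon a ha, fun hc => heI (hc ▸ ha)⟩
    have := hIbase.eq_of_subset_isBase hB.1 (hIB.trans diff_subset)
    exact heI (this ▸ he)
  obtain ⟨f, hfI, hfB⟩ := hex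
  have hfC : f ∈ C \ {e} := (hI.subset hfI).resolve_left (fun h => hfB h.1)
  have hind : M.Indep (insert f (B \ {e})) := hIbase.indep.subset (insert_subset hfI hBI)
  have hbase := hB.1.exchange_isBase_of_indep hfB hind
  exact (weight_swap hB he hfB hbase).trans (le_sSup_img hC hfC)

lemma mu_le_of_not_mem_base [M.Finite] (hM : M.PaperLoopless) (hB : IsOptimalBase M x B)
    (hf : f ∈ M.E \ B) : muWeight M x f ≤ x f := by
  obtain ⟨hC, hfC, hCs⟩ := fc_spec (exists_fundCircuit_of_base hB.1 hf)
  exact (mu_le hC hfC).trans (sSup_img_le (circuit_diff_nonempty_s17 hM hC hfC)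
    (fun g hg => opt_le hB hf hC hfC hCs hg))

lemma key_pointwise [M.Finite] (hM : M.PaperLoopless) (hB : IsOptimalBase M x B)
    (hf : f ∈ M.E \ B) (he : e ∈ fc M B f \ {f}) :
    x e + muWeight M x e ≤ x f + muWeight M x f := by
  obtain ⟨hC, hfC, hCs⟩ := fc_spec (exists_fundCircuit_of_base hB.1 hf)
  have h1 : muWeight M x e ≤ x f := by
    refine (mu_le hC he.1).trans (sSup_img_le (circuit_diff_nonempty_s17 hM hC he.1) ?_)
    intro g hg
    by_cases hgf : g = f
    · exact le_of_eq (hgf ▸ rfl)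
    · exact opt_le hB hf hC hfC hCs ⟨hg.1, hgf⟩
  have h2 : x e ≤ muWeight M x f := by
    refine le_mu ⟨_, hC, hfC⟩ (fun C' hC' hfC' => ?_)
    exact (le_sSup_img hC he).trans (fund_min hM hB hf _ C' le_rfl hC' hfC')
  linarith

end Opt

section Hall

variable {M : Matroid α} {B B'' : Set α} {x : α → ℝ}

lemma sum_diff_le [M.Finite] (hB : M.IsBase B) (hB'' : M.IsBase B'') (y : α → ℝ)
    (hy : ∀ f ∈ M.E \ B, ∀ e ∈ fc M B f \ {f}, y e ≤ y f) :
    ∑ᶠ e ∈ B \ B'', y e ≤ ∑ᶠ f ∈ B'' \ B, y f := by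
  classical
  have hBfin : B.Finite := M.set_finite B hB.subset_ground
  have hB''fin : B''.Finite := M.set_finite B'' hB''.subset_ground
  have hD1 : (B \ B'').Finite := hBfin.diff
  have hD2 : (B'' \ B).Finite := hB''fin.diff
  set D1 : Finset α := hD1.toFinset with hD1def
  set D2 : Finset α := hD2.toFinset with hD2def
  have hfc : ∀ f ∈ B'' \ B,
      M.IsCircuit' (fc M B f) ∧ f ∈ fc M B f ∧ fc M B f ⊆ insert f B :=
    fun f hf => fc_spec (exists_fundCircuit_of_base hB ⟨hB''.subset_ground hf.1, hf.2⟩)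
  have htfin : ∀ f : α, ((fc M B f \ {f}) ∩ (B \ B'')).Finite :=
    fun f => hD1.subset inter_subset_right
  set t : {f // f ∈ D2} → Finset α := fun f => (htfin ↑f).toFinset with htdef
  have hall : ∀ s : Finset {f // f ∈ D2}, s.card ≤ (s.biUnion t).card := by
    intro s
    set S : Set α := (fun a : {f // f ∈ D2} => (a : α)) '' ↑s with hSdef
    have hSD2 : S ⊆ B'' \ B := by
      rintro a ⟨b, _, rfl⟩
      exact hD2.mem_toFinset.1 b.2
    set T : Set α := ⋃ f ∈ S, (fc M B f \ {f}) with hTdef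
    have hTB : T ⊆ B := by
      rintro a ha
      simp only [hTdef, mem_iUnion, exists_prop] at ha
      obtain ⟨f, hfS, hafc⟩ := ha
      rcases (hfc f (hSD2 hfS)).2.2 hafc.1 with h | h
      · exact absurd (h ▸ rfl) hafc.2
      · exact h
    have hTfin : T.Finite := hBfin.subset hTB
    have hSfin : S.Finite := s.finite_toSet.image _
    have hScard : S.ncard = s.card := by
      rw [hSdef, ncard_image_of_injective _ Subtype.val_injective, ncard_coe_finset]
    have hIindep : M.Indep (T ∪ B ∩ B'') :=
      hB.indep.subset (union_subset hTB inter_subset_left)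
    have hJindep : M.Indep (S ∪ B ∩ B'') :=
      hB''.indep.subset (union_subset (fun a ha => (hSD2 ha).1) inter_subset_right)
    have hJcl : S ∪ B ∩ B'' ⊆ M.closure (T ∪ B ∩ B'') := by
      rintro a (ha | ha)
      · have h1 := (hfc a (hSD2 ha)).1.mem_closure_diff_singleton (hfc a (hSD2 ha)).2.1
        refine M.closure_subset_closure ?_ h1
        exact (subset_biUnion_of_mem (u := fun f => fc M B f \ {f}) ha).trans
          subset_union_left
      · exact M.subset_closure _
          (union_subset (hTB.trans hB.subset_ground)
            (inter_subset_left.trans hB.subset_ground)) (Or.inr ha)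
    have hencard : (S ∪ B ∩ B'').encard ≤ (T ∪ B ∩ B'').encard := by
      obtain ⟨J', hJ', hJJ'⟩ := hJindep.subset_isBasis_of_subset hJcl
        (M.closure_subset_ground _)
      exact (encard_mono hJJ').trans (hJ'.encard_eq_encard hIindep.isBasis_closure).le
    have hninter : Disjoint S (B ∩ B'') := disjoint_left.2 fun a ha hb => (hSD2 ha).2 hb.1
    have hI_eq : T ∪ B ∩ B'' = (T \ B'') ∪ B ∩ B'' := by
      ext a
      constructor
      · rintro (h | h)
        · by_cases hb : a ∈ B''
          · exact Or.inr ⟨hTB h, hb⟩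
          · exact Or.inl ⟨h, hb⟩
        · exact Or.inr h
      · rintro (h | h)
        · exact Or.inl h.1
        · exact Or.inr h
    have hdisj2 : Disjoint (T \ B'') (B ∩ B'') := disjoint_left.2 fun a ha hb => ha.2 hb.2
    have hfinI : (T ∪ B ∩ B'').Finite := hTfin.union (hBfin.inter_of_left _)
    have hncard : (S ∪ B ∩ B'').ncard ≤ (T ∪ B ∩ B'').ncard := by
      rw [ncard_def, ncard_def]
      exact ENat.toNat_le_toNat hencard hfinI.encard_lt_top.ne
    rw [ncard_union_eq hninter hSfin (hBfin.inter_of_left _), hI_eq,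
      ncard_union_eq hdisj2 (hTfin.diff) (hBfin.inter_of_left _)] at hncard
    have hbi : ((s.biUnion t : Finset α) : Set α) = T \ B'' := by
      ext a
      simp only [Finset.coe_biUnion, Finset.mem_coe, Finset.mem_biUnion, htdef,
        Set.Finite.mem_toFinset, mem_inter_iff, mem_diff, hTdef, mem_iUnion, exists_prop,
        hSdef, mem_image]
      constructor
      · rintro ⟨i, his, ⟨hafc, haB⟩⟩
        exact ⟨⟨↑i, ⟨i, his, rfl⟩, hafc⟩, haB.2⟩
      · rintro ⟨⟨f, ⟨i, his, rfl⟩, hafc⟩, haB''⟩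
        have haB : a ∈ B := hTB (by
          simp only [hTdef, mem_iUnion, exists_prop]
          exact ⟨↑i, ⟨i, his, rfl⟩, hafc⟩)
        exact ⟨i, his, ⟨hafc, haB, haB''⟩⟩
    have hbicard : (T \ B'').ncard = (s.biUnion t).card := by
      rw [← hbi, ncard_coe_finset]
    omega
  obtain ⟨σ, hσinj, hσmem⟩ := (Finset.all_card_le_biUnion_card_iff_exists_injective t).1 hall
  have hmem' : ∀ a : {f // f ∈ D2}, σ a ∈ (fc M B ↑a \ {↑a}) ∩ (B \ B'') := by
    intro a
    have := hσmem a
    rwa [htdef, Set.Finite.mem_toFinset] at this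
  have himg : Finset.univ.image σ ⊆ D1 := by
    intro a ha
    obtain ⟨b, _, rfl⟩ := Finset.mem_image.1 ha
    exact hD1.mem_toFinset.2 (hmem' b).2
  have hcard_eq : D1.card = D2.card := by
    have h1 := hB.encard_diff_comm hB''
    have h2 : (B \ B'').ncard = (B'' \ B).ncard := by
      rw [ncard_def, ncard_def, h1]
    rwa [ncard_eq_toFinset_card _ hD1, ncard_eq_toFinset_card _ hD2] at h2
  have himg_eq : Finset.univ.image σ = D1 := by
    refine Finset.eq_of_subset_of_card_le himg ?_
    rw [hcard_eq, Finset.card_image_of_injective _ hσinj, Finset.card_univ, Fintype.card_coe]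
  rw [← Set.Finite.coe_toFinset hD1, ← Set.Finite.coe_toFinset hD2,
    finsum_mem_coe_finset, finsum_mem_coe_finset]
  calc ∑ e ∈ D1, y e = ∑ a ∈ Finset.univ.image σ, y a := by rw [himg_eq]
    _ = ∑ a : {f // f ∈ D2}, y (σ a) :=
        Finset.sum_image (fun a _ b _ h => hσinj h)
    _ ≤ ∑ a : {f // f ∈ D2}, y ↑a := by
        refine Finset.sum_le_sum fun a _ => ?_
        have haD2 : (a : α) ∈ B'' \ B := hD2.mem_toFinset.1 a.2
        exact hy ↑a ⟨hB''.subset_ground haD2.1, haD2.2⟩ (σ a) (hmem' a).1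
    _ = ∑ f ∈ D2, y f := Finset.sum_coe_sort D2 y

end Hall

/-- global sensitivity: changes by at most half the tolerance
preserve optimality. -/
theorem stmt17 (M : Matroid α) [M.Finite] (hM : M.PaperLoopless)
    (x x' : α → ℝ) {B : Set α} (hB : IsOptimalBase M x B)
    (hdiff : ∀ e ∈ M.E, |x' e - x e| ≤ |muWeight M x e - x e| / 2)
    (hout : ∀ e ∉ M.E, x' e = x e) :
    IsOptimalBase M x' B := by
  classical
  obtain ⟨hbase, hopt⟩ := hB
  refine ⟨hbase, fun B'' hB'' => ?_⟩
  have hBfin : B.Finite := M.set_finite B hbase.subset_ground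
  have hB''fin : B''.Finite := M.set_finite B'' hB''.subset_ground
  have split : ∀ z : α → ℝ,
      setWeight z B = (∑ᶠ e ∈ B ∩ B'', z e) + ∑ᶠ e ∈ B \ B'', z e := by
    intro z
    rw [setWeight_def, ← finsum_mem_union
      (disjoint_left.2 fun a ha hb => hb.2 ha.2)
      (hBfin.inter_of_left _) (hBfin.diff), inter_union_diff]
  have split'' : ∀ z : α → ℝ,
      setWeight z B'' = (∑ᶠ e ∈ B ∩ B'', z e) + ∑ᶠ e ∈ B'' \ B, z e := by
    intro z
    rw [setWeight_def, ← finsum_mem_union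
      (disjoint_left.2 fun a ha hb => hb.2 ha.1)
      (hBfin.inter_of_left _) (hB''fin.diff),
      show B ∩ B'' ∪ B'' \ B = B'' from by
        ext a
        simp only [mem_union, mem_inter_iff, mem_diff]
        tauto]
  set y : α → ℝ := fun e => (x e + muWeight M x e) / 2 with hy
  have hb1 : ∀ e ∈ B \ B'', x' e ≤ y e := by
    intro e he
    have heE : e ∈ M.E := hbase.subset_ground he.1
    have h1 := hdiff e heE
    have h2 : x e ≤ muWeight M x e := mu_ge_of_mem_base hM ⟨hbase, hopt⟩ he.1
    rw [show |muWeight M x e - x e| = muWeight M x e - x e from abs_of_nonneg (by linarith)]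
      at h1
    have h3 := abs_le.1 h1
    simp only [hy]
    linarith [h3.2]
  have hb2 : ∀ f ∈ B'' \ B, y f ≤ x' f := by
    intro f hf
    have hfE : f ∈ M.E \ B := ⟨hB''.subset_ground hf.1, hf.2⟩
    have h1 := hdiff f hfE.1
    have h2 : muWeight M x f ≤ x f := mu_le_of_not_mem_base hM ⟨hbase, hopt⟩ hfE
    rw [show |muWeight M x f - x f| = x f - muWeight M x f from by
      rw [abs_of_nonpos (by linarith), neg_sub]] at h1
    have h3 := abs_le.1 h1
    simp only [hy]
    linarith [h3.1]
  have hmid : ∑ᶠ e ∈ B \ B'', y e ≤ ∑ᶠ f ∈ B'' \ B, y f := by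
    refine sum_diff_le hbase hB'' y fun f hf e he => ?_
    have := key_pointwise hM ⟨hbase, hopt⟩ hf he
    simp only [hy]
    linarith
  have hs1 : ∑ᶠ e ∈ B \ B'', x' e ≤ ∑ᶠ e ∈ B \ B'', y e := by
    rw [← Set.Finite.coe_toFinset (hBfin.diff (t := B'')), finsum_mem_coe_finset,
      finsum_mem_coe_finset]
    exact Finset.sum_le_sum fun e he =>
      hb1 e ((hBfin.diff (t := B'')).mem_toFinset.1 he)
  have hs2 : ∑ᶠ f ∈ B'' \ B, y f ≤ ∑ᶠ f ∈ B'' \ B, x' f := by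
    rw [← Set.Finite.coe_toFinset (hB''fin.diff (t := B)), finsum_mem_coe_finset,
      finsum_mem_coe_finset]
    exact Finset.sum_le_sum fun f hf =>
      hb2 f ((hB''fin.diff (t := B)).mem_toFinset.1 hf)
  rw [split x', split'' x']
  linarith
end
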